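/- arXiv:1301.2860 — 3 statements merged into one kernel-verified Lean document; each statement's English description precedes it below -/
import Mathlib

section
/- Let X and X' be distinct b×m matrices over F_q. Choose t elements r_1,...,r_t independently and uniformly from F_q, and form the m×t matrix D with entries D_{k,j} = r_j^k. Then the probability that X D = X' D is at most (m/q)^t. -/
/-- For distinct `b×m` matrices `X ≠ X'` over `F_q`, with `t` i.i.d. uniform
points `r_1,…,r_t` and the Vandermonde-type matrix `D` with `D_{k,j} = r_j^k`, the
probability that `X D = X' D` is at most `(m/q)^t`. -/
theorem stmt_1 (q b m t : ℕ) (F : Type*) [Field F] [Fintype F] [DecidableEq F]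
    (hq : Fintype.card F = q)
    (X X' : Matrix (Fin b) (Fin m) F) (hXX : X ≠ X') :
    ((Finset.univ.filter (fun r : Fin t → F =>
        X * (Matrix.of fun (k : Fin m) (j : Fin t) => (r j) ^ ((k : ℕ) + 1))
          = X' * (Matrix.of fun (k : Fin m) (j : Fin t) => (r j) ^ ((k : ℕ) + 1)))).card : ℝ)
        / (Fintype.card (Fin t → F))
      ≤ ((m : ℝ) / q) ^ t := by
  -- find a row i, col k0 where X and X' differ
  obtain ⟨i, k0, hik⟩ : ∃ i k, X i k ≠ X' i k := by
    by_contra h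
    push_neg at h
    exact hXX (by ext i k; exact h i k)
  set p : Polynomial F := ∑ k : Fin m, Polynomial.C ((X - X') i k) * Polynomial.X ^ ((k : ℕ) + 1)
    with hp
  have hcoeff : ∀ k0 : Fin m, p.coeff ((k0 : ℕ) + 1) = (X - X') i k0 := by
    intro k0
    rw [hp, Polynomial.finset_sum_coeff]
    rw [Finset.sum_eq_single k0]
    · simp [sub_mul, Polynomial.coeff_X_pow]
    · intro k _ hk
      simp only [Polynomial.coeff_C_mul, Polynomial.coeff_X_pow]
      have : ¬ ((k : ℕ) + 1 = (k0 : ℕ) + 1) := by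
        simp [Fin.val_injective.ne hk]
      rw [if_neg (fun h => this h.symm), mul_zero]
    · simp
  have hpne : p ≠ 0 := by
    intro h
    apply hik
    have := hcoeff k0
    rw [h] at this
    simp [Matrix.sub_apply] at this
    exact sub_eq_zero.mp this.symm
  have hdeg : p.natDegree ≤ m := by
    apply Polynomial.natDegree_sum_le_of_forall_le
    intro k _
    apply le_trans (Polynomial.natDegree_C_mul_le _ _)
    simp [Nat.succ_le_of_lt k.isLt]
  set S : Finset F := p.roots.toFinset with hS
  have hScard : S.card ≤ m := by
    calc S.card ≤ Multiset.card p.roots := p.roots.toFinset_card_le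
    _ ≤ p.natDegree := Polynomial.card_roots' p
    _ ≤ m := hdeg
  have hsub : (Finset.univ.filter (fun r : Fin t → F =>
        X * (Matrix.of fun (k : Fin m) (j : Fin t) => (r j) ^ ((k : ℕ) + 1))
          = X' * (Matrix.of fun (k : Fin m) (j : Fin t) => (r j) ^ ((k : ℕ) + 1))))
      ⊆ Fintype.piFinset (fun _ : Fin t => S) := by
    intro r hr
    simp only [Finset.mem_filter] at hr
    rw [Fintype.mem_piFinset]
    intro j
    have hev : p.eval (r j) = 0 := by
      have := congrFun (congrFun hr.2 i) j
      simp only [Matrix.mul_apply, Matrix.of_apply] at this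
      simp only [hp, Polynomial.eval_finset_sum, Polynomial.eval_mul, Polynomial.eval_C,
        Polynomial.eval_pow, Polynomial.eval_X, Matrix.sub_apply, sub_mul]
      rw [Finset.sum_sub_distrib, this]
      ring
    rw [hS, Multiset.mem_toFinset, Polynomial.mem_roots hpne]
    exact hev
  have hcard := Finset.card_le_card hsub
  rw [Fintype.card_piFinset] at hcard
  simp only [Finset.prod_const, Finset.card_univ, Fintype.card_fin] at hcard
  have hq0 : 0 < q := hq ▸ Fintype.card_pos
  have : ((Finset.univ.filter (fun r : Fin t → F =>
        X * (Matrix.of fun (k : Fin m) (j : Fin t) => (r j) ^ ((k : ℕ) + 1))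
          = X' * (Matrix.of fun (k : Fin m) (j : Fin t) => (r j) ^ ((k : ℕ) + 1)))).card : ℝ)
      ≤ (m : ℝ) ^ t := by
    calc _ ≤ ((S.card : ℝ)) ^ t := by exact_mod_cast hcard
    _ ≤ (m : ℝ) ^ t := pow_le_pow_left₀ (Nat.cast_nonneg _) (by exact_mod_cast hScard) t
  rw [Fintype.card_pi]
  simp only [Finset.prod_const, Finset.card_univ, Fintype.card_fin, hq]
  rw [div_pow, div_le_div_iff₀ (by positivity) (by positivity)]
  push_cast
  calc _ ≤ (m:ℝ)^t * (q:ℝ)^t := by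
        apply mul_le_mul_of_nonneg_right this (by positivity)
  _ = _ := by ring
end

section
/- Suppose for each j = 1,...,i, T_j ∈ F_q^{M_j×c_j} is a fixed full-row-rank matrix and K_j ∈ F_q^{c_j×b} has i.i.d. uniform entries, with b ≤ M_1 + ... + M_i. Then the stacked matrix T^{(i)} = [T_1 K_1; T_2 K_2; ...; T_i K_i] (vertical concatenation) has full column rank b with probability at least 1 − b/q. -/
open Finset Matrix

/-- Weierstrass-type product inequality. -/
lemma aux_one_sub_sum_le_prod {ι : Type*} (s : Finset ι) (f : ι → ℝ)
    (h0 : ∀ k ∈ s, 0 ≤ f k) (h1 : ∀ k ∈ s, f k ≤ 1) :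
    1 - ∑ k ∈ s, f k ≤ ∏ k ∈ s, (1 - f k) := by
  classical
  induction s using Finset.cons_induction with
  | empty => simp
  | cons a s ha ih =>
    rw [Finset.sum_cons, Finset.prod_cons]
    have h0a := h0 a (Finset.mem_cons_self a s)
    have h1a := h1 a (Finset.mem_cons_self a s)
    have h0' : ∀ k ∈ s, 0 ≤ f k := fun k hk => h0 k (Finset.mem_cons_of_mem hk)
    have h1' : ∀ k ∈ s, f k ≤ 1 := fun k hk => h1 k (Finset.mem_cons_of_mem hk)
    have hsum : 0 ≤ ∑ k ∈ s, f k := Finset.sum_nonneg h0'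
    have := mul_le_mul_of_nonneg_left (ih h0' h1') (by linarith : (0:ℝ) ≤ 1 - f a)
    nlinarith [this]

/-- For a map with equinumerous fibers, counting preimages of a predicate. -/
lemma aux_card_filter_comp {α β : Type*} [Fintype α] [Fintype β] [DecidableEq β]
    (f : α → β)
    (hfib : ∀ y₁ y₂ : β, (Finset.univ.filter fun x => f x = y₁).card =
      (Finset.univ.filter fun x => f x = y₂).card)
    (P : β → Prop) [DecidablePred P] :
    (Finset.univ.filter fun x => P (f x)).card * Fintype.card β
      = (Finset.univ.filter P).card * Fintype.card α := by
  classical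
  rcases isEmpty_or_nonempty β with h | h
  · have : IsEmpty α := ⟨fun a => h.false (f a)⟩
    simp
  · obtain ⟨y₀⟩ := h
    set c := (Finset.univ.filter fun x => f x = y₀).card with hc
    have h1 : (Finset.univ.filter fun x => P (f x)).card = (Finset.univ.filter P).card * c := by
      rw [Finset.card_eq_sum_card_fiberwise (f := f) (t := Finset.univ.filter P)
        (fun x hx => by simpa using (Finset.mem_filter.mp hx).2)]
      rw [Finset.sum_congr rfl (fun y hy => ?_), Finset.sum_const, smul_eq_mul]
      have hPy : P y := (Finset.mem_filter.mp hy).2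
      have : (Finset.univ.filter fun x => P (f x)).filter (fun x => f x = y)
          = Finset.univ.filter fun x => f x = y := by
        ext x
        simp only [Finset.mem_filter, Finset.mem_univ, true_and]
        constructor
        · exact fun h => h.2
        · intro h; exact ⟨h ▸ hPy, h⟩
      rw [this, hfib y y₀]
    have h2 : Fintype.card α = Fintype.card β * c := by
      rw [← Finset.card_univ (α := α), Finset.card_eq_sum_card_fiberwise (f := f)
        (t := (Finset.univ : Finset β)) (fun x _ => Finset.mem_univ _)]
      rw [Finset.sum_congr rfl (fun y _ => hfib y y₀), Finset.sum_const, smul_eq_mul,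
        Finset.card_univ]
    rw [h1, h2]; ring

/-- A surjective additive hom has equinumerous fibers. -/
lemma aux_fib_eq {α β : Type*} [Fintype α] [DecidableEq α] [DecidableEq β]
    [AddCommGroup α] [AddCommGroup β]
    (f : α →+ β) (hs : Function.Surjective f) (y₁ y₂ : β) :
    (Finset.univ.filter fun x => f x = y₁).card =
      (Finset.univ.filter fun x => f x = y₂).card := by
  obtain ⟨d, hd⟩ := hs (y₂ - y₁)
  apply Finset.card_nbij' (fun x => x + d) (fun x => x - d)
  · intro a ha
    simp only [Finset.mem_coe, Finset.mem_filter, Finset.mem_univ, true_and] at ha ⊢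
    rw [map_add, ha, hd]; abel
  · intro a ha
    simp only [Finset.mem_coe, Finset.mem_filter, Finset.mem_univ, true_and] at ha ⊢
    rw [map_sub, ha, hd]; abel
  · intro a _; simp
  · intro a _; simp

/-- Full column rank iff columns are linearly independent. -/
lemma aux_rank_iff {F : Type*} [Field F] {m : Type*} [Fintype m] {b : ℕ}
    (A : Matrix m (Fin b) F) :
    A.rank = b ↔ LinearIndependent F Aᵀ := by
  rw [Matrix.rank_eq_finrank_span_cols, show LinearIndependent F Aᵀ ↔ LinearIndependent F A.col from Iff.rfl,
    linearIndependent_iff_card_eq_finrank_span]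
  simp [Set.finrank, eq_comm]

open scoped Classical in
/-- With fixed full-row-rank `T_j ∈ F_q^{M_j×c_j}` and independent uniform
random `K_j ∈ F_q^{c_j×b}`, `b ≤ ∑ M_j`, the vertical stack of the `T_j K_j` has full
column rank `b` with probability at least `1 − b/q`. -/
theorem stmt_14 (q i b : ℕ) (F : Type*) [Field F] [Fintype F] [DecidableEq F]
    (hq : Fintype.card F = q)
    (Mdim cdim : Fin i → ℕ)
    (T : ∀ j, Matrix (Fin (Mdim j)) (Fin (cdim j)) F)
    (hT : ∀ j, (T j).rank = Mdim j)
    (hb : b ≤ ∑ j, Mdim j) :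
    1 - (b : ℝ) / q ≤
      ((Finset.univ.filter
          (fun K : ∀ j : Fin i, Matrix (Fin (cdim j)) (Fin b) F =>
            (Matrix.of fun (p : Σ j : Fin i, Fin (Mdim j)) (k : Fin b) =>
                (T p.1 * K p.1) p.2 k).rank = b)).card : ℝ)
        / (Fintype.card (∀ j : Fin i, Matrix (Fin (cdim j)) (Fin b) F)) := by
  set m := (Σ j : Fin i, Fin (Mdim j)) with hm
  set N := ∑ j, Mdim j with hN
  have hq2 : 2 ≤ q := hq ▸ Fintype.one_lt_card
  have hqR : (1:ℝ) ≤ (q:ℝ) := by exact_mod_cast Nat.one_le_of_lt hq2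
  have hqR0 : (0:ℝ) < (q:ℝ) := by linarith
  have hcardm : Fintype.card m = N := by
    simp [hm, hN, Fintype.card_sigma]
  -- the stacking map as an additive hom
  let Φ : (∀ j : Fin i, Matrix (Fin (cdim j)) (Fin b) F) →+ Matrix m (Fin b) F :=
    { toFun := fun K => Matrix.of fun p k => (T p.1 * K p.1) p.2 k
      map_zero' := by
        ext p k
        simp [Matrix.mul_apply]
      map_add' := by
        intro K L
        ext p k
        simp [Matrix.mul_apply, Finset.sum_add_distrib, mul_add] }
  -- each T j gives a surjective mulVec
  have hTs : ∀ j, Function.Surjective (T j).mulVec := by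
    intro j
    have hfr : Module.finrank F (LinearMap.range (T j).mulVecLin) = Mdim j := hT j
    have htop : LinearMap.range (T j).mulVecLin = ⊤ := by
      apply Submodule.eq_top_of_finrank_eq
      rw [hfr, Module.finrank_pi, Fintype.card_fin]
    intro v
    obtain ⟨w, hw⟩ := LinearMap.range_eq_top.mp htop v
    exact ⟨w, by rw [← (T j).mulVecLin_apply, hw]⟩
  -- Φ is surjective
  have hΦs : Function.Surjective Φ := by
    intro A
    choose w hw using fun (jk : Fin i × Fin b) =>
      hTs jk.1 (fun p2 => A ⟨jk.1, p2⟩ jk.2)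
    refine ⟨fun j => Matrix.of fun l k => w (j, k) l, ?_⟩
    ext ⟨j, p2⟩ k
    have := congrFun (hw (j, k)) p2
    simpa [Φ, Matrix.mul_apply, Matrix.mulVec, dotProduct] using this
  -- count full-rank matrices in the codomain
  have hcount : (Finset.univ.filter (fun A : Matrix m (Fin b) F => A.rank = b)).card
      = ∏ k : Fin b, (q ^ N - q ^ (k : ℕ)) := by
    rw [← Fintype.card_subtype]
    have e : {A : Matrix m (Fin b) F // A.rank = b}
        ≃ {s : Fin b → (m → F) // LinearIndependent F s} :=
      { toFun := fun A => ⟨fun k j => A.1 j k, by exact (aux_rank_iff A.1).mp A.2⟩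
        invFun := fun s => ⟨Matrix.of fun j k => s.1 k j, by exact (aux_rank_iff _).mpr s.2⟩
        left_inv := fun A => rfl
        right_inv := fun s => rfl }
    rw [Fintype.card_congr e, ← Nat.card_eq_fintype_card,
      card_linearIndependent (K := F) (V := m → F)
        (by rw [Module.finrank_pi, hcardm]; exact hb)]
    simp [Module.finrank_pi, hcardm, hq]
  -- transfer via fibers
  have hfc := aux_card_filter_comp (Φ : (∀ j : Fin i, Matrix (Fin (cdim j)) (Fin b) F) →
      Matrix m (Fin b) F) (aux_fib_eq Φ hΦs) (fun A : Matrix m (Fin b) F => A.rank = b)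
  have hcardC : Fintype.card (Matrix m (Fin b) F) = q ^ (N * b) := by
    have h1 : Fintype.card (Matrix m (Fin b) F) = Fintype.card (m → Fin b → F) := rfl
    rw [h1, Fintype.card_fun, Fintype.card_fun, hq, Fintype.card_fin, hcardm,
      ← pow_mul, mul_comm b N]
  have hD0 : 0 < Fintype.card (∀ j : Fin i, Matrix (Fin (cdim j)) (Fin b) F) :=
    Fintype.card_pos
  have hC0 : 0 < Fintype.card (Matrix m (Fin b) F) := Fintype.card_pos
  -- the ratio equals the codomain ratio
  have hratio : ((Finset.univ.filter
          (fun K : ∀ j : Fin i, Matrix (Fin (cdim j)) (Fin b) F =>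
            (Matrix.of fun (p : m) (k : Fin b) =>
                (T p.1 * K p.1) p.2 k).rank = b)).card : ℝ)
        / (Fintype.card (∀ j : Fin i, Matrix (Fin (cdim j)) (Fin b) F))
      = ((∏ k : Fin b, (q ^ N - q ^ (k : ℕ)) : ℕ) : ℝ) / (q ^ (N * b) : ℕ) := by
    rw [← hcount, ← hcardC]
    rw [div_eq_div_iff (by exact_mod_cast hD0.ne') (by exact_mod_cast hC0.ne')]
    have : (Finset.univ.filter
          (fun K : ∀ j : Fin i, Matrix (Fin (cdim j)) (Fin b) F =>
            (Matrix.of fun (p : m) (k : Fin b) =>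
                (T p.1 * K p.1) p.2 k).rank = b))
        = (Finset.univ.filter fun K => (fun A : Matrix m (Fin b) F => A.rank = b) (Φ K)) := by
      apply Finset.filter_congr
      intro K _
      rfl
    rw [this]
    exact_mod_cast hfc
  rw [hratio]
  -- now the purely numerical estimate
  have hpow_le : ∀ k : Fin b, q ^ (k : ℕ) ≤ q ^ N := fun k =>
    Nat.pow_le_pow_right (by omega) (le_trans k.isLt.le hb)
  have hcast : ((∏ k : Fin b, (q ^ N - q ^ (k : ℕ)) : ℕ) : ℝ)
      = ∏ k : Fin b, ((q:ℝ) ^ N - (q:ℝ) ^ (k : ℕ)) := by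
    push_cast
    refine Finset.prod_congr rfl fun k _ => ?_
    rw [Nat.cast_sub (hpow_le k)]
    push_cast
    ring
  have hqN0 : (0:ℝ) < (q:ℝ) ^ N := by positivity
  have hden : ((q ^ (N * b) : ℕ) : ℝ) = ∏ _k : Fin b, (q:ℝ) ^ N := by
    push_cast
    rw [Finset.prod_const, Finset.card_univ, Fintype.card_fin, ← pow_mul]
  rw [hcast, hden, ← Finset.prod_div_distrib]
  have hfact : ∀ k : Fin b, ((q:ℝ) ^ N - (q:ℝ) ^ (k : ℕ)) / (q:ℝ) ^ N
      = 1 - (q:ℝ) ^ (k : ℕ) / (q:ℝ) ^ N := by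
    intro k
    rw [sub_div, div_self (ne_of_gt hqN0)]
  calc 1 - (b : ℝ) / q ≤ 1 - ∑ k : Fin b, (q:ℝ) ^ (k : ℕ) / (q:ℝ) ^ N := by
        have hterm : ∀ k : Fin b, (q:ℝ) ^ (k : ℕ) / (q:ℝ) ^ N ≤ 1 / q := by
          intro k
          rw [div_le_div_iff₀ hqN0 hqR0]
          calc (q:ℝ) ^ (k : ℕ) * q = (q:ℝ) ^ ((k : ℕ) + 1) := by ring
            _ ≤ (q:ℝ) ^ N := by
                apply pow_le_pow_right₀ hqR
                have : (k : ℕ) < b := k.isLt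
                omega
            _ = 1 * (q:ℝ) ^ N := by ring
        have : ∑ k : Fin b, (q:ℝ) ^ (k : ℕ) / (q:ℝ) ^ N ≤ (b : ℝ) / q := by
          calc ∑ k : Fin b, (q:ℝ) ^ (k : ℕ) / (q:ℝ) ^ N ≤ ∑ _k : Fin b, 1 / (q:ℝ) :=
                Finset.sum_le_sum fun k _ => hterm k
            _ = (b : ℝ) / q := by
                rw [Finset.sum_const, Finset.card_univ, Fintype.card_fin]
                simp [div_eq_mul_inv]
        linarith
    _ ≤ ∏ k : Fin b, (1 - (q:ℝ) ^ (k : ℕ) / (q:ℝ) ^ N) := by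
        apply aux_one_sub_sum_le_prod
        · intro k _; positivity
        · intro k _
          rw [div_le_one hqN0]
          exact_mod_cast hpow_le k
    _ = ∏ k : Fin b, ((q:ℝ) ^ N - (q:ℝ) ^ (k : ℕ)) / (q:ℝ) ^ N :=
        Finset.prod_congr rfl fun k _ => (hfact k).symm
end

section
/- Let Y ∈ F_q^{r×(n+b)} be a fixed matrix, X_0 ∈ F_q^{b×(n+b)} a fixed matrix in the row space of Y (X_0 = X^s Y for some X^s). Choose t elements r_1,...,r_t i.i.d. uniform on F_q and set D ∈ F_q^{(n+b)×t} with D_{k,j} = r_j^k, H = X_0 D. Then the probability that there exists V ∈ F_q^{b×r} with V Y ≠ X_0 but V Y D = H is at most q^{br} · ((n+b)/q)^t. -/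
open scoped Classical

/-- Root-counting lemma: for a nonzero matrix `M`, the set of `x` killing all rows of
the Vandermonde-type evaluation has at most `m` elements. -/
lemma aux_root_count {b m : ℕ} {F : Type*} [Field F] [Fintype F] [DecidableEq F]
    (M : Matrix (Fin b) (Fin m) F) (hM : M ≠ 0) :
    (Finset.univ.filter (fun x : F =>
      ∀ i, ∑ k : Fin m, M i k * x ^ ((k : ℕ) + 1) = 0)).card ≤ m := by
  obtain ⟨i₀, k₀, h0⟩ : ∃ i k, M i k ≠ 0 := by
    by_contra h
    push_neg at h
    exact hM (Matrix.ext fun i k => h i k)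
  set p : Polynomial F := ∑ k : Fin m, Polynomial.C (M i₀ k) * Polynomial.X ^ ((k : ℕ) + 1)
    with hp
  have hcoeff : p.coeff ((k₀ : ℕ) + 1) = M i₀ k₀ := by
    rw [hp, Polynomial.finset_sum_coeff]
    rw [Finset.sum_eq_single k₀]
    · simp
    · intro k _ hk
      have : ((k : ℕ) + 1) ≠ ((k₀ : ℕ) + 1) := by
        simpa [Fin.val_injective.eq_iff] using hk
      simp only [Polynomial.coeff_C_mul, Polynomial.coeff_X_pow, if_neg (Ne.symm this),
        mul_zero]
    · simp
  have hpne : p ≠ 0 := by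
    intro h
    rw [h] at hcoeff
    simp at hcoeff
    exact h0 hcoeff.symm
  have hdeg : p.natDegree ≤ m := by
    apply Polynomial.natDegree_sum_le_of_forall_le
    intro k _
    calc (Polynomial.C (M i₀ k) * Polynomial.X ^ ((k : ℕ) + 1)).natDegree
        ≤ (k : ℕ) + 1 := Polynomial.natDegree_C_mul_X_pow_le _ _
      _ ≤ m := k.2
  have hsub : (Finset.univ.filter (fun x : F =>
      ∀ i, ∑ k : Fin m, M i k * x ^ ((k : ℕ) + 1) = 0)) ⊆ p.roots.toFinset := by
    intro x hx
    rw [Finset.mem_filter] at hx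
    rw [Multiset.mem_toFinset, Polynomial.mem_roots hpne]
    have := hx.2 i₀
    simp [Polynomial.IsRoot, hp, Polynomial.eval_finset_sum, this]
  calc (Finset.univ.filter (fun x : F =>
        ∀ i, ∑ k : Fin m, M i k * x ^ ((k : ℕ) + 1) = 0)).card
      ≤ p.roots.toFinset.card := Finset.card_le_card hsub
    _ ≤ Multiset.card p.roots := p.roots.toFinset_card_le
    _ ≤ p.natDegree := p.card_roots'
    _ ≤ m := hdeg

open scoped Classical in
/-- For fixed `Y` and `X_0 = X^s Y`, with a random Vandermonde hash matrix
`D` built from `t` i.i.d. uniform points and `H = X_0 D`, the probability that some `V`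
with `V Y ≠ X_0` satisfies `V Y D = H` is at most `q^{br} ((n+b)/q)^t`. -/
theorem stmt_16 (q r n b t : ℕ) (F : Type*) [Field F] [Fintype F] [DecidableEq F]
    (hq : Fintype.card F = q)
    (Y : Matrix (Fin r) (Fin (n + b)) F)
    (Xs : Matrix (Fin b) (Fin r) F) (X₀ : Matrix (Fin b) (Fin (n + b)) F)
    (hX₀ : X₀ = Xs * Y) :
    ((Finset.univ.filter (fun ρ : Fin t → F =>
        ∃ V : Matrix (Fin b) (Fin r) F, V * Y ≠ X₀ ∧
          V * Y * (Matrix.of fun (k : Fin (n + b)) (j : Fin t) => (ρ j) ^ ((k : ℕ) + 1))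
            = X₀ * (Matrix.of fun (k : Fin (n + b)) (j : Fin t) =>
                (ρ j) ^ ((k : ℕ) + 1)))).card : ℝ)
        / (Fintype.card (Fin t → F))
      ≤ (q : ℝ) ^ (b * r) * (((n + b : ℕ) : ℝ) / q) ^ t := by
  have hq1 : 1 ≤ q := hq ▸ Fintype.card_pos
  -- per-V event bound
  have key : ∀ V : Matrix (Fin b) (Fin r) F,
      (Finset.univ.filter (fun ρ : Fin t → F =>
        V * Y ≠ X₀ ∧
          V * Y * (Matrix.of fun (k : Fin (n + b)) (j : Fin t) => (ρ j) ^ ((k : ℕ) + 1))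
            = X₀ * (Matrix.of fun (k : Fin (n + b)) (j : Fin t) =>
                (ρ j) ^ ((k : ℕ) + 1)))).card ≤ (n + b) ^ t := by
    intro V
    by_cases hV : V * Y = X₀
    · simp [hV]
    · set M := V * Y - X₀ with hM
      have hMne : M ≠ 0 := sub_ne_zero.mpr hV
      set S : Finset F := Finset.univ.filter (fun x : F =>
        ∀ i, ∑ k : Fin (n + b), M i k * x ^ ((k : ℕ) + 1) = 0) with hS
      have hsub : (Finset.univ.filter (fun ρ : Fin t → F =>
          V * Y ≠ X₀ ∧
            V * Y * (Matrix.of fun (k : Fin (n + b)) (j : Fin t) => (ρ j) ^ ((k : ℕ) + 1))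
              = X₀ * (Matrix.of fun (k : Fin (n + b)) (j : Fin t) =>
                  (ρ j) ^ ((k : ℕ) + 1))))
          ⊆ Fintype.piFinset (fun _ : Fin t => S) := by
        intro ρ hρ
        rw [Finset.mem_filter] at hρ
        rw [Fintype.mem_piFinset]
        intro j
        rw [hS, Finset.mem_filter]
        refine ⟨Finset.mem_univ _, fun i => ?_⟩
        have hent := congrFun (congrFun hρ.2.2 i) j
        rw [hM]
        simp only [Matrix.sub_apply, sub_mul]
        rw [Finset.sum_sub_distrib, sub_eq_zero]
        simpa [Matrix.mul_apply] using hent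
      calc _ ≤ (Fintype.piFinset (fun _ : Fin t => S)).card := Finset.card_le_card hsub
        _ = S.card ^ t := by simp [Fintype.card_piFinset]
        _ ≤ (n + b) ^ t := Nat.pow_le_pow_left (aux_root_count M hMne) t
  -- union bound
  have hunion : (Finset.univ.filter (fun ρ : Fin t → F =>
        ∃ V : Matrix (Fin b) (Fin r) F, V * Y ≠ X₀ ∧
          V * Y * (Matrix.of fun (k : Fin (n + b)) (j : Fin t) => (ρ j) ^ ((k : ℕ) + 1))
            = X₀ * (Matrix.of fun (k : Fin (n + b)) (j : Fin t) =>
                (ρ j) ^ ((k : ℕ) + 1)))).card ≤ q ^ (b * r) * (n + b) ^ t := by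
    have hsub : (Finset.univ.filter (fun ρ : Fin t → F =>
        ∃ V : Matrix (Fin b) (Fin r) F, V * Y ≠ X₀ ∧
          V * Y * (Matrix.of fun (k : Fin (n + b)) (j : Fin t) => (ρ j) ^ ((k : ℕ) + 1))
            = X₀ * (Matrix.of fun (k : Fin (n + b)) (j : Fin t) =>
                (ρ j) ^ ((k : ℕ) + 1))))
        ⊆ Finset.univ.biUnion (fun V : Matrix (Fin b) (Fin r) F =>
          Finset.univ.filter (fun ρ : Fin t → F =>
            V * Y ≠ X₀ ∧
              V * Y * (Matrix.of fun (k : Fin (n + b)) (j : Fin t) => (ρ j) ^ ((k : ℕ) + 1))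
                = X₀ * (Matrix.of fun (k : Fin (n + b)) (j : Fin t) =>
                    (ρ j) ^ ((k : ℕ) + 1)))) := by
      intro ρ hρ
      rw [Finset.mem_filter] at hρ
      obtain ⟨V, hV⟩ := hρ.2
      exact Finset.mem_biUnion.mpr ⟨V, Finset.mem_univ _,
        Finset.mem_filter.mpr ⟨Finset.mem_univ _, hV⟩⟩
    calc _ ≤ _ := Finset.card_le_card hsub
      _ ≤ ∑ V : Matrix (Fin b) (Fin r) F, (Finset.univ.filter (fun ρ : Fin t → F =>
            V * Y ≠ X₀ ∧
              V * Y * (Matrix.of fun (k : Fin (n + b)) (j : Fin t) => (ρ j) ^ ((k : ℕ) + 1))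
                = X₀ * (Matrix.of fun (k : Fin (n + b)) (j : Fin t) =>
                    (ρ j) ^ ((k : ℕ) + 1)))).card := Finset.card_biUnion_le
      _ ≤ ∑ _V : Matrix (Fin b) (Fin r) F, (n + b) ^ t :=
          Finset.sum_le_sum (fun V _ => key V)
      _ = q ^ (b * r) * (n + b) ^ t := by
          have hcard : Fintype.card (Matrix (Fin b) (Fin r) F) = q ^ (b * r) := by
            rw [Fintype.card_congr (Matrix.of (m := Fin b) (n := Fin r) (α := F)).symm]
            simp [Fintype.card_fun, hq, ← pow_mul, mul_comm r b]
          simp [Finset.sum_const, hcard, mul_comm]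
  -- arithmetic
  have hcardfun : (Fintype.card (Fin t → F) : ℝ) = (q : ℝ) ^ t := by
    simp [Fintype.card_fun, hq]
  rw [hcardfun, div_le_iff₀ (by positivity)]
  have : ((q : ℝ) ^ (b * r) * ((n + b : ℕ) / q : ℝ) ^ t) * (q : ℝ) ^ t
      = (q : ℝ) ^ (b * r) * ((n + b : ℕ) : ℝ) ^ t := by
    rw [div_pow, mul_assoc, div_mul_cancel₀]
    positivity
  rw [this]
  calc ((Finset.univ.filter _).card : ℝ)
      ≤ ((q ^ (b * r) * (n + b) ^ t : ℕ) : ℝ) := by exact_mod_cast hunion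
    _ = (q : ℝ) ^ (b * r) * ((n + b : ℕ) : ℝ) ^ t := by push_cast; ring
end
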